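/- arXiv:math/0608139 — 2 statements merged into one kernel-verified Lean document; each statement's English description precedes it below -/
import Mathlib

section
/- Let X and Y be uniform spaces, let ν ∈ Meas(Y), and let f : X × Y → ℝ be semiuniform. Then the function ν♭f : X → ℝ defined by (ν♭f)(x) = ν(y ↦ f(x,y)) belongs to Ub(X) and ‖ν♭f‖ ≤ ‖ν‖·‖f‖. -/
noncomputable section

open Filter Topology

/-- `f` is a bounded uniformly continuous real-valued function,
i.e. a member of `Ub(X)`. -/
def IsUb {X : Type*} [UniformSpace X] (f : X → ℝ) : Prop :=
  UniformContinuous f ∧ ∃ C : ℝ, ∀ x, |f x| ≤ C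

/-- Supremum norm of a real-valued function. -/
def supNorm {α : Type*} (f : α → ℝ) : ℝ :=
  sSup (Set.range fun x => |f x|)

/-- `μ` is (the restriction to `Ub(X)` of) a norm-continuous linear functional on `Ub(X)`,
i.e. a member of `Meas(X)`.  It is represented as a bare map on all functions;
only its values on `Ub(X)` are relevant. -/
def IsMeas {X : Type*} [UniformSpace X] (μ : (X → ℝ) → ℝ) : Prop :=
  (∀ f g : X → ℝ, IsUb f → IsUb g → μ (f + g) = μ f + μ g) ∧
  (∀ (c : ℝ) (f : X → ℝ), IsUb f → μ (c • f) = c * μ f) ∧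
  (∃ C : ℝ, ∀ f : X → ℝ, IsUb f → (∀ x, |f x| ≤ 1) → |μ f| ≤ C)

/-- The dual norm on `Meas(X)`:  `‖μ‖ = sup {|μ f| : f ∈ Ub(X), ‖f‖ ≤ 1}`. -/
def measNorm {X : Type*} [UniformSpace X] (μ : (X → ℝ) → ℝ) : ℝ :=
  sSup {r : ℝ | ∃ f : X → ℝ, IsUb f ∧ (∀ x, |f x| ≤ 1) ∧ r = |μ f|}

/-- `μ` is a positive functional:  `μ f ≥ 0` whenever `f ∈ Ub(X)` and `f ≥ 0`. -/
def IsPositive {X : Type*} [UniformSpace X] (μ : (X → ℝ) → ℝ) : Prop :=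
  ∀ f : X → ℝ, IsUb f → (∀ x, 0 ≤ f x) → 0 ≤ μ f

/-- `μ` is a *uniform measure*: on every norm-bounded uniformly equicontinuous set
`H ⊆ Ub(X)`, `μ` is continuous for the topology of pointwise convergence. -/
def IsUniformMeasure {X : Type*} [UniformSpace X] (μ : (X → ℝ) → ℝ) : Prop :=
  ∀ H : Set (X → ℝ),
    (∃ C : ℝ, ∀ f ∈ H, ∀ x, |f x| ≤ C) →
    H.UniformEquicontinuous →
    ∀ f₀ ∈ H, ∀ ε : ℝ, 0 < ε →
      ∃ (K : Finset X) (δ : ℝ), 0 < δ ∧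
        ∀ f ∈ H, (∀ x ∈ K, |f x - f₀ x| < δ) → |μ f - μ f₀| < ε

/-- A *semiuniform* function on `X × Y`, i.e. a member of `Ub(X ⋉ Y)` where `X ⋉ Y` is the
semiuniform product: `f` is bounded, the family of sections `x ↦ f (x, y)` (for `y ∈ Y`)
is uniformly equicontinuous on `X`, and every section `y ↦ f (x, y)` is uniformly
continuous on `Y`. -/
def Semiuniform {X Y : Type*} [UniformSpace X] [UniformSpace Y] (f : X × Y → ℝ) : Prop :=
  (∃ C : ℝ, ∀ p, |f p| ≤ C) ∧
  UniformEquicontinuous (fun y : Y => fun x : X => f (x, y)) ∧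
  ∀ x : X, UniformContinuous fun y : Y => f (x, y)

/-- The direct product `μ ⊗ ν`, evaluated at `f : X × Y → ℝ`:
`(μ ⊗ ν)(f) = μ (x ↦ ν (y ↦ f (x, y)))`. -/
def dirProd {X Y : Type*} (μ : (X → ℝ) → ℝ) (ν : (Y → ℝ) → ℝ) (f : X × Y → ℝ) : ℝ :=
  μ fun x => ν fun y => f (x, y)

/-- Convolution: `(μ ⋆ ν)(f) = μ (x ↦ ν (y ↦ f (x · y)))`. -/
def conv {G : Type*} [Mul G] (μ ν : (G → ℝ) → ℝ) : (G → ℝ) → ℝ :=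
  fun f => μ fun x => ν fun y => f (x * y)

/-- The weak-* topology on `Meas(X)`: the topology of pointwise convergence on `Ub(X)`. -/
def weakStarMeas (X : Type*) [UniformSpace X] :
    TopologicalSpace {ν : (X → ℝ) → ℝ // IsMeas ν} :=
  TopologicalSpace.induced
    (fun ν => fun f : {f : X → ℝ // IsUb f} => ν.1 f.1) Pi.topologicalSpace


section Aux

variable {Y : Type*} [UniformSpace Y]

lemma isUb_zero : IsUb (fun _ : Y => (0:ℝ)) :=
  ⟨uniformContinuous_const, 0, fun _ => by simp⟩

lemma isUb_smul (c : ℝ) {g : Y → ℝ} (hg : IsUb g) : IsUb (c • g) := by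
  obtain ⟨hu, C, hC⟩ := hg
  refine ⟨hu.const_smul c, |c| * C, fun y => ?_⟩
  simp only [Pi.smul_apply, smul_eq_mul, abs_mul]
  exact mul_le_mul_of_nonneg_left (hC y) (abs_nonneg c)

lemma isUb_sub {g h : Y → ℝ} (hg : IsUb g) (hh : IsUb h) : IsUb (g - h) := by
  obtain ⟨hu, C, hC⟩ := hg
  obtain ⟨hu', C', hC'⟩ := hh
  refine ⟨hu.sub hu', C + C', fun y => ?_⟩
  exact (abs_sub _ _).trans (add_le_add (hC y) (hC' y))

lemma measNorm_bddAbove {ν : (Y → ℝ) → ℝ} (hν : IsMeas ν) :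
    BddAbove {r : ℝ | ∃ f : Y → ℝ, IsUb f ∧ (∀ x, |f x| ≤ 1) ∧ r = |ν f|} := by
  obtain ⟨C, hC⟩ := hν.2.2
  exact ⟨C, fun r ⟨g, hg, hb, hr⟩ => hr ▸ hC g hg hb⟩

lemma nu_zero {ν : (Y → ℝ) → ℝ} (hν : IsMeas ν) : ν (fun _ => (0:ℝ)) = 0 := by
  have h := hν.2.1 0 (fun _ => (0:ℝ)) isUb_zero
  simp at h; exact h

lemma measNorm_nonneg {ν : (Y → ℝ) → ℝ} (hν : IsMeas ν) : 0 ≤ measNorm ν := by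
  have hmem : (0:ℝ) ∈ {r : ℝ | ∃ f : Y → ℝ, IsUb f ∧ (∀ x, |f x| ≤ 1) ∧ r = |ν f|} :=
    ⟨fun _ => 0, isUb_zero, fun _ => by norm_num, by rw [nu_zero hν]; simp⟩
  exact le_csSup (measNorm_bddAbove hν) hmem

lemma key_bound {ν : (Y → ℝ) → ℝ} (hν : IsMeas ν) {g : Y → ℝ} (hg : IsUb g)
    {M : ℝ} (hM : 0 ≤ M) (hb : ∀ y, |g y| ≤ M) : |ν g| ≤ measNorm ν * M := by
  rcases eq_or_lt_of_le hM with h0 | hpos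
  · have hg0 : g = fun _ => (0:ℝ) := by
      funext y
      have := hb y
      rw [← h0] at this
      exact abs_nonpos_iff.mp this
    rw [hg0, nu_zero hν, ← h0]
    simp
  · set h : Y → ℝ := M⁻¹ • g with hh
    have hhub : IsUb h := isUb_smul _ hg
    have hb1 : ∀ y, |h y| ≤ 1 := by
      intro y
      simp only [hh, Pi.smul_apply, smul_eq_mul, abs_mul, abs_inv, abs_of_pos hpos]
      rw [inv_mul_le_iff₀ hpos, mul_one]
      exact hb y
    have hmem : |ν h| ∈ {r : ℝ | ∃ f : Y → ℝ, IsUb f ∧ (∀ x, |f x| ≤ 1) ∧ r = |ν f|} :=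
      ⟨h, hhub, hb1, rfl⟩
    have h1 : |ν h| ≤ measNorm ν := le_csSup (measNorm_bddAbove hν) hmem
    have hgh : g = M • h := by
      rw [hh, smul_smul, mul_inv_cancel₀ hpos.ne', one_smul]
    calc |ν g| = |ν (M • h)| := by rw [← hgh]
      _ = M * |ν h| := by rw [hν.2.1 M h hhub, abs_mul, abs_of_pos hpos]
      _ ≤ M * measNorm ν := mul_le_mul_of_nonneg_left h1 hpos.le
      _ = measNorm ν * M := mul_comm _ _

lemma nu_sub {ν : (Y → ℝ) → ℝ} (hν : IsMeas ν) {g h : Y → ℝ} (hg : IsUb g) (hh : IsUb h) :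
    ν g - ν h = ν (g - h) := by
  have : ν (h + (g - h)) = ν h + ν (g - h) := hν.1 h (g - h) hh (isUb_sub hg hh)
  rw [add_sub_cancel] at this
  rw [this]; ring

end Aux

theorem stmt2 {X Y : Type*} [UniformSpace X] [UniformSpace Y]
    (ν : (Y → ℝ) → ℝ) (hν : IsMeas ν)
    (f : X × Y → ℝ) (hf : Semiuniform f) :
    IsUb (fun x => ν fun y => f (x, y)) ∧
      supNorm (fun x => ν fun y => f (x, y)) ≤ measNorm ν * supNorm f := by
  obtain ⟨⟨C, hC⟩, hequi, hsect⟩ := hf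
  have hgx : ∀ x, IsUb fun y => f (x, y) := fun x => ⟨hsect x, C, fun y => hC (x, y)⟩
  have hbddf : BddAbove (Set.range fun p : X × Y => |f p|) :=
    ⟨C, by rintro r ⟨p, rfl⟩; exact hC p⟩
  have hsupf_nonneg : 0 ≤ supNorm f := by
    rcases isEmpty_or_nonempty (X × Y) with hE | hNE
    · rw [supNorm, Set.range_eq_empty, Real.sSup_empty]
    · obtain ⟨p⟩ := hNE
      exact (abs_nonneg (f p)).trans (le_csSup hbddf ⟨p, rfl⟩)
  have hsect_le : ∀ x y, |f (x, y)| ≤ supNorm f := fun x y => le_csSup hbddf ⟨(x, y), rfl⟩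
  have hFbd : ∀ x, |ν fun y => f (x, y)| ≤ measNorm ν * supNorm f := fun x =>
    key_bound hν (hgx x) hsupf_nonneg (hsect_le x)
  have hFuc : UniformContinuous fun x => ν fun y => f (x, y) := by
    rw [UniformContinuous, Metric.uniformity_basis_dist.tendsto_right_iff]
    intro ε hε
    set m := measNorm ν with hm
    have hm0 : 0 ≤ m := measNorm_nonneg hν
    set δ := ε / (m + 1) with hδ
    have hδpos : 0 < δ := div_pos hε (by linarith)
    have hU := hequi _ (Metric.dist_mem_uniformity hδpos)
    filter_upwards [hU] with xy hxy
    have hdiff : ∀ y, |((fun y => f (xy.1, y)) - fun y => f (xy.2, y)) y| ≤ δ := by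
      intro y
      have := hxy y
      simp only [Set.mem_setOf_eq, Real.dist_eq] at this
      simpa [Pi.sub_apply] using this.le
    have hkey : |ν ((fun y => f (xy.1, y)) - fun y => f (xy.2, y))| ≤ m * δ :=
      key_bound hν (isUb_sub (hgx xy.1) (hgx xy.2)) hδpos.le hdiff
    have hsub := nu_sub hν (hgx xy.1) (hgx xy.2)
    rw [Real.dist_eq, hsub]
    calc |ν ((fun y => f (xy.1, y)) - fun y => f (xy.2, y))| ≤ m * δ := hkey
      _ < (m + 1) * δ := by nlinarith
      _ = ε := by rw [hδ]; field_simp [show m + 1 ≠ 0 by linarith]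
  refine ⟨⟨hFuc, measNorm ν * supNorm f, hFbd⟩, ?_⟩
  apply Real.sSup_le
  · rintro r ⟨x, rfl⟩
    exact hFbd x
  · exact mul_nonneg (measNorm_nonneg hν) hsupf_nonneg
end
end

section
/- (Fubini's theorem for uniform measures.) Let X and Y be uniform spaces, let μ ∈ Meas(X) be a uniform measure, let ν ∈ Meas(Y), and let f : X × Y → ℝ be semiuniform. Then the function y ↦ μ(x ↦ f(x,y)) belongs to Ub(Y) (each section x ↦ f(x,y) lies in Ub(X)), and μ(x ↦ ν(y ↦ f(x,y))) = ν(y ↦ μ(x ↦ f(x,y))). -/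
noncomputable section

open Filter Topology

open scoped Uniformity Pointwise

section Aux

variable {Z : Type*} [UniformSpace Z]

lemma isUb_zero_s7 : IsUb (0 : Z → ℝ) :=
  ⟨uniformContinuous_const, 0, fun _ => by simp⟩

lemma IsUb.add {f g : Z → ℝ} (hf : IsUb f) (hg : IsUb g) : IsUb (f + g) := by
  obtain ⟨Cf, hCf⟩ := hf.2
  obtain ⟨Cg, hCg⟩ := hg.2
  exact ⟨hf.1.add hg.1, Cf + Cg, fun x =>
    (abs_add_le _ _).trans (add_le_add (hCf x) (hCg x))⟩

lemma IsUb.smul {f : Z → ℝ} (hf : IsUb f) (c : ℝ) : IsUb (c • f) := by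
  obtain ⟨Cf, hCf⟩ := hf.2
  refine ⟨hf.1.const_smul c, |c| * Cf, fun x => ?_⟩
  have := hCf x
  have h0 : |f x| ≥ 0 := abs_nonneg _
  simp only [Pi.smul_apply, smul_eq_mul, abs_mul]
  exact mul_le_mul_of_nonneg_left (hCf x) (abs_nonneg c)

lemma IsUb.sub {f g : Z → ℝ} (hf : IsUb f) (hg : IsUb g) : IsUb (f - g) := by
  have : f - g = f + (-1 : ℝ) • g := by
    funext x; simp [sub_eq_add_neg]
  rw [this]
  exact hf.add (hg.smul (-1))

lemma isUb_sum {ι : Type*} (t : Finset ι) (g : ι → Z → ℝ) (hg : ∀ i ∈ t, IsUb (g i)) :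
    IsUb (∑ i ∈ t, g i) := by
  classical
  induction t using Finset.induction with
  | empty => simpa using isUb_zero_s7
  | @insert a s hnot ih =>
    rw [Finset.sum_insert hnot]
    exact (hg a (Finset.mem_insert_self a s)).add
      (ih fun i hi => hg i (Finset.mem_insert_of_mem hi))

lemma meas_zero {μ : (Z → ℝ) → ℝ} (hμ : IsMeas μ) : μ 0 = 0 := by
  have h := hμ.2.1 0 0 isUb_zero_s7
  rw [zero_smul] at h
  linarith [h]

lemma meas_sub {μ : (Z → ℝ) → ℝ} (hμ : IsMeas μ) {f g : Z → ℝ} (hf : IsUb f) (hg : IsUb g) :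
    μ (f - g) = μ f - μ g := by
  have h1 : f - g = f + (-1 : ℝ) • g := by funext x; simp [sub_eq_add_neg]
  rw [h1, hμ.1 f ((-1 : ℝ) • g) hf (hg.smul (-1)), hμ.2.1 (-1) g hg]
  ring

lemma meas_sum {ι : Type*} {μ : (Z → ℝ) → ℝ} (hμ : IsMeas μ) (t : Finset ι) (c : ι → ℝ)
    (g : ι → Z → ℝ) (hg : ∀ i ∈ t, IsUb (g i)) :
    μ (∑ i ∈ t, c i • g i) = ∑ i ∈ t, c i * μ (g i) := by
  classical
  induction t using Finset.induction with
  | empty => simpa using meas_zero hμ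
  | @insert a s hnot ih =>
    have hUb : IsUb (∑ i ∈ s, c i • g i) :=
      isUb_sum s _ (fun i hi => (hg i (Finset.mem_insert_of_mem hi)).smul (c i))
    rw [Finset.sum_insert hnot, Finset.sum_insert hnot,
      hμ.1 _ _ ((hg a (Finset.mem_insert_self a s)).smul (c a)) hUb,
      hμ.2.1 (c a) (g a) (hg a (Finset.mem_insert_self a s)),
      ih fun i hi => hg i (Finset.mem_insert_of_mem hi)]

lemma meas_bound {μ : (Z → ℝ) → ℝ} (hμ : IsMeas μ) :
    ∃ C : ℝ, 0 ≤ C ∧ ∀ f : Z → ℝ, IsUb f → ∀ s : ℝ, 0 ≤ s → (∀ x, |f x| ≤ s) → |μ f| ≤ C * s := by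
  obtain ⟨C, hC⟩ := hμ.2.2
  have hC0 : 0 ≤ C := le_trans (abs_nonneg _) (hC 0 isUb_zero_s7 (fun x => by simp))
  refine ⟨C, hC0, fun f hf s hs hfs => ?_⟩
  rcases eq_or_lt_of_le hs with h | h
  · have hf0 : f = 0 := by
      funext x
      exact abs_nonpos_iff.mp (by rw [h]; exact hfs x)
    rw [hf0, meas_zero hμ, abs_zero]
    positivity
  · have hg : IsUb (s⁻¹ • f) := hf.smul s⁻¹
    have hg1 : ∀ x, |(s⁻¹ • f) x| ≤ 1 := by
      intro x
      simp only [Pi.smul_apply, smul_eq_mul, abs_mul, abs_inv, abs_of_pos h]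
      rw [inv_mul_le_iff₀ h, mul_one]
      exact hfs x
    have := hC _ hg hg1
    rw [hμ.2.1 s⁻¹ f hf, abs_mul, abs_inv, abs_of_pos h] at this
    calc |μ f| = s * (s⁻¹ * |μ f|) := by field_simp
    _ ≤ s * C := mul_le_mul_of_nonneg_left this h.le
    _ = C * s := mul_comm _ _

/-- ε-δ characterization of uniform equicontinuity into ℝ. -/
lemma ue_eps {ι : Type*} {F : ι → Z → ℝ} (h : UniformEquicontinuous F) {ε : ℝ} (hε : 0 < ε) :
    ∀ᶠ p : Z × Z in 𝓤 Z, ∀ i, |F i p.1 - F i p.2| < ε := by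
  have := h _ (Metric.dist_mem_uniformity (α := ℝ) hε)
  refine this.mono fun p hp i => ?_
  have := hp i
  rwa [Set.mem_setOf_eq, Real.dist_eq] at this

lemma uc_of_eps {g : Z → ℝ}
    (h : ∀ ε : ℝ, 0 < ε → ∀ᶠ p : Z × Z in 𝓤 Z, |g p.1 - g p.2| < ε) :
    UniformContinuous g := by
  rw [uniformContinuous_def]
  intro U hU
  rw [Metric.mem_uniformity_dist] at hU
  obtain ⟨ε, hε, hεU⟩ := hU
  exact (h ε hε).mono fun p hp => hεU (by rwa [Real.dist_eq])

end Aux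

/-- Finitely many `Ub` functionals values of a measure of norm `≤ M` can be approximated by a
molecular measure (finite combination of Dirac measures) of norm `≤ M`. -/
lemma molecular_approx {Y : Type*} [UniformSpace Y] [Nonempty Y] (ν : (Y → ℝ) → ℝ)
    (hν : IsMeas ν) {M : ℝ} (hM : 0 < M)
    (hMb : ∀ h : Y → ℝ, IsUb h → ∀ s : ℝ, 0 ≤ s → (∀ y, |h y| ≤ s) → |ν h| ≤ M * s)
    {ι : Type*} [Fintype ι] (φ : ι → Y → ℝ) (hφ : ∀ j, IsUb (φ j)) {δ : ℝ} (hδ : 0 < δ) :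
    ∃ (m : ℕ) (c : Fin m → ℝ) (yv : Fin m → Y),
      (∑ i, |c i|) ≤ M ∧ ∀ j, |(∑ i, c i * φ j (yv i)) - ν (φ j)| < δ := by
  classical
  set T : Y → (ι → ℝ) := fun y j => φ j y with hT
  set A : Set (ι → ℝ) := Set.range T ∪ -Set.range T with hA
  set S : Set (ι → ℝ) := closure (M • convexHull ℝ A) with hS
  set v : ι → ℝ := fun j => ν (φ j) with hv
  -- Step 1: v ∈ S
  have hvS : v ∈ S := by
    by_contra hvS
    obtain ⟨L, u, hLS, hLv⟩ := geometric_hahn_banach_closed_point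
      (((convex_convexHull ℝ A).smul M).closure) isClosed_closure hvS
    set a : ι → ℝ := fun j => L (fun k => if j = k then (1 : ℝ) else 0) with ha
    have hLrep : ∀ w : ι → ℝ, L w = ∑ j, w j * a j := by
      intro w
      have := LinearMap.pi_apply_eq_sum_univ (L.toLinearMap) w
      simpa [smul_eq_mul] using this
    set h : Y → ℝ := fun y => L (T y) with hh
    have hhub : IsUb h := by
      have hfun : h = ∑ j : ι, a j • φ j := by
        funext y
        rw [hh]
        simp only [hLrep (T y), Finset.sum_apply, Pi.smul_apply, smul_eq_mul, hT]
        exact (hLrep _).trans (Finset.sum_congr rfl fun j _ => mul_comm _ _)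
      rw [hfun]
      exact isUb_sum _ _ fun j _ => (hφ j).smul (a j)
    have hνh : ν h = L v := by
      have hfun : h = ∑ j : ι, a j • φ j := by
        funext y
        rw [hh]
        simp only [hLrep (T y), Finset.sum_apply, Pi.smul_apply, smul_eq_mul, hT]
        exact (hLrep _).trans (Finset.sum_congr rfl fun j _ => mul_comm _ _)
      rw [hfun, meas_sum hν _ _ _ (fun j _ => hφ j), hLrep v]
      exact Finset.sum_congr rfl fun j _ => mul_comm _ _
    have hTy : ∀ y : Y, M * (L (T y)) < u := by
      intro y
      have : M • T y ∈ M • convexHull ℝ A :=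
        Set.smul_mem_smul_set (subset_convexHull ℝ A (Set.mem_union_left _ ⟨y, rfl⟩))
      have := hLS _ (subset_closure this)
      rwa [map_smul, smul_eq_mul] at this
    have hTy' : ∀ y : Y, -(M * (L (T y))) < u := by
      intro y
      have hmem : -T y ∈ A := by
        rw [hA]
        exact Set.mem_union_right _ (by rw [Set.mem_neg]; simp)
      have : M • (-T y) ∈ M • convexHull ℝ A :=
        Set.smul_mem_smul_set (subset_convexHull ℝ A hmem)
      have := hLS _ (subset_closure this)
      rw [map_smul, map_neg, smul_eq_mul] at this
      linarith [this]
    have habs : ∀ y : Y, M * |h y| < u := by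
      intro y
      rw [hh]
      rcases abs_cases (L (T y)) with ⟨he, _⟩ | ⟨he, _⟩ <;> rw [he]
      · exact hTy y
      · have := hTy' y; linarith
    have hu0 : 0 < u := by
      obtain ⟨y₀⟩ := ‹Nonempty Y›
      have := habs y₀
      nlinarith [abs_nonneg (h y₀), hM]
    have hbd : ∀ y, |h y| ≤ u / M := by
      intro y
      rw [le_div_iff₀ hM]
      nlinarith [habs y]
    have := hMb h hhub (u / M) (by positivity) hbd
    rw [mul_div_cancel₀ _ (ne_of_gt hM)] at this
    rw [hνh] at this
    have : L v ≤ u := le_trans (le_abs_self _) this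
    linarith
  -- Step 2: extract approximant
  rw [hS, Metric.mem_closure_iff] at hvS
  obtain ⟨p, hp, hdist⟩ := hvS δ hδ
  obtain ⟨q, hq, rfl⟩ := hp
  rw [convexHull_eq] at hq
  obtain ⟨ι', t, w, z, hw0, hw1, hzA, hcm⟩ := hq
  have hz' : ∀ i : {x // x ∈ t}, ∃ (σ : ℝ) (y : Y), |σ| = 1 ∧ z i.1 = σ • T y := by
    rintro ⟨i, hi⟩
    rcases hzA i hi with ⟨y, hy⟩ | hy
    · exact ⟨1, y, by norm_num, by rw [← hy]; simp⟩
    · rw [Set.mem_neg] at hy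
      obtain ⟨y, hy⟩ := hy
      exact ⟨-1, y, by norm_num, by rw [← neg_neg (z i), ← hy]; funext k; simp⟩
  choose σ yy hσ hz using hz'
  set m := t.card with hm
  set e : Fin m ≃ {x // x ∈ t} := t.equivFin.symm with he
  refine ⟨m, fun i => M * w (e i).1 * σ (e i), fun i => yy (e i), ?_, ?_⟩
  · have : ∀ i : Fin m, |M * w (e i).1 * σ (e i)| = M * w (e i).1 := by
      intro i
      rw [abs_mul, hσ, mul_one, abs_mul, abs_of_pos hM,
        abs_of_nonneg (hw0 _ (e i).2)]
    rw [Finset.sum_congr rfl fun i _ => this i]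
    have : (∑ i : Fin m, M * w (e i).1) = M * ∑ i ∈ t, w i := by
      rw [← Finset.mul_sum]
      congr 1
      rw [← Finset.sum_attach t w, ← Finset.univ_eq_attach]
      exact Equiv.sum_comp e fun i => w i.1
    rw [this, hw1, mul_one]
  · intro j
    have hpj : (M • q) j = ∑ i : Fin m, (M * w (e i).1 * σ (e i)) * φ j (yy (e i)) := by
      have hq : q = ∑ i ∈ t, w i • z i := by
        rw [← hcm, Finset.centerMass_eq_of_sum_1 _ _ hw1]
      rw [hq]
      simp only [Pi.smul_apply, smul_eq_mul, Finset.sum_apply]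
      rw [Finset.mul_sum, ← Finset.sum_attach t fun i => M * (w i * z i j),
        ← Finset.univ_eq_attach,
        ← Equiv.sum_comp e fun i : {x // x ∈ t} => M * (w i.1 * z i.1 j)]
      refine Finset.sum_congr rfl fun i _ => ?_
      have := hz (e i)
      rw [this]
      simp only [Pi.smul_apply, smul_eq_mul, hT]
      ring
    rw [← hpj]
    have h1 : dist (v j) ((M • q) j) ≤ dist v (M • q) := dist_le_pi_dist v (M • q) j
    have h2 : |(M • q) j - v j| < δ := by
      rw [abs_sub_comm, ← Real.dist_eq]
      exact lt_of_le_of_lt h1 hdist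
    exact h2

/-- Fubini's theorem for uniform measures. -/
theorem stmt7 {X Y : Type*} [UniformSpace X] [UniformSpace Y]
    (μ : (X → ℝ) → ℝ) (hμ : IsMeas μ) (hμu : IsUniformMeasure μ)
    (ν : (Y → ℝ) → ℝ) (hν : IsMeas ν)
    (f : X × Y → ℝ) (hf : Semiuniform f) :
    IsUb (fun y => μ fun x => f (x, y)) ∧
      μ (fun x => ν fun y => f (x, y)) = ν fun y => μ fun x => f (x, y) := by
  classical
  obtain ⟨C0, hC0⟩ := hf.1
  set D : ℝ := |C0| + 1 with hD
  have hD0 : (0 : ℝ) < D := by positivity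
  have hfD : ∀ p, |f p| ≤ D := fun p => (hC0 p).trans (by rw [hD]; linarith [le_abs_self C0])
  have hsecX : ∀ y, IsUb (fun x => f (x, y)) := fun y =>
    ⟨hf.2.1.uniformContinuous y, D, fun x => hfD _⟩
  have hsecY : ∀ x, IsUb (fun y => f (x, y)) := fun x =>
    ⟨hf.2.2 x, D, fun y => hfD _⟩
  obtain ⟨Cμ, hCμ0, hCμ⟩ := meas_bound hμ
  obtain ⟨Cν, hCν0, hCν⟩ := meas_bound hν
  by_cases hY : Nonempty Y
  case neg =>
    have hYe : IsEmpty Y := not_nonempty_iff.mp hY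
    constructor
    · refine ⟨?_, 0, fun y => (hYe.false y).elim⟩
      have hbot : (𝓤 Y) = ⊥ := by
        rw [← Filter.empty_mem_iff_bot]
        have huniv : (Set.univ : Set (Y × Y)) = ∅ := by
          ext p
          exact (hYe.false p.1).elim
        rw [← huniv]
        exact Filter.univ_mem
      unfold UniformContinuous
      rw [hbot]
      exact Filter.tendsto_bot
    · have h1 : (fun x => ν fun y => f (x, y)) = (0 : X → ℝ) := by
        funext x
        have he : (fun y => f (x, y)) = (0 : Y → ℝ) := funext fun y => (hYe.false y).elim
        rw [he, meas_zero hν, Pi.zero_apply]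
      have h2 : (fun y => μ fun x => f (x, y)) = (0 : Y → ℝ) :=
        funext fun y => (hYe.false y).elim
      rw [h1, h2, meas_zero hμ, meas_zero hν]
  case pos =>
  haveI := hY
  obtain ⟨y₀⟩ := hY
  set F : Y → ℝ := fun y => μ fun x => f (x, y) with hF
  set g : X → ℝ := fun x => ν fun y => f (x, y) with hg
  -- Part 1: F ∈ Ub(Y)
  have hFub : IsUb F := by
    refine ⟨uc_of_eps fun ε hε => ?_, Cμ * D, fun y => hCμ _ (hsecX y) D hD0.le fun x => hfD _⟩
    set H₂ : Set (X → ℝ) :=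
      Set.range (fun p : Y × Y => fun x => f (x, p.1) - f (x, p.2)) with hH₂
    have hH₂b : ∃ C : ℝ, ∀ h ∈ H₂, ∀ x, |h x| ≤ C := by
      refine ⟨2 * D, ?_⟩
      rintro h ⟨p, rfl⟩ x
      have h1 := hfD (x, p.1)
      have h2 := hfD (x, p.2)
      have := abs_sub (f (x, p.1)) (f (x, p.2))
      dsimp only
      linarith
    have hH₂ue : H₂.UniformEquicontinuous := by
      intro U hU
      rw [Metric.mem_uniformity_dist] at hU
      obtain ⟨ε', hε', hεU⟩ := hU
      refine (ue_eps hf.2.1 (half_pos hε')).mono fun q hq i => ?_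
      obtain ⟨p, hp⟩ := i.2
      apply hεU
      rw [Real.dist_eq, ← hp]
      have h1 := hq p.1
      have h2 := hq p.2
      have key : (fun x => f (x, p.1) - f (x, p.2)) q.1 -
          (fun x => f (x, p.1) - f (x, p.2)) q.2 =
          (f (q.1, p.1) - f (q.2, p.1)) - (f (q.1, p.2) - f (q.2, p.2)) := by ring_nf
      rw [key]
      have := abs_sub (f (q.1, p.1) - f (q.2, p.1)) (f (q.1, p.2) - f (q.2, p.2))
      linarith
    obtain ⟨K, δ, hδ, hK⟩ := hμu H₂ hH₂b hH₂ue
      (fun x => f (x, y₀) - f (x, y₀)) ⟨(y₀, y₀), rfl⟩ ε hε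
    have hsec : ∀ x ∈ K, ∀ᶠ q : Y × Y in 𝓤 Y, |f (x, q.1) - f (x, q.2)| < δ := by
      intro x _
      have hmem := uniformContinuous_def.mp (hf.2.2 x) _ (Metric.dist_mem_uniformity hδ)
      exact Filter.eventually_iff.mpr (by simpa [Real.dist_eq] using hmem)
    have hev : ∀ᶠ q : Y × Y in 𝓤 Y, ∀ x ∈ K, |f (x, q.1) - f (x, q.2)| < δ :=
      (Filter.eventually_all_finset K).mpr hsec
    refine hev.mono fun q hq => ?_
    have hmem : (fun x => f (x, q.1) - f (x, q.2)) ∈ H₂ := ⟨(q.1, q.2), rfl⟩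
    have hcl := hK _ hmem fun x hx => by
      simpa using hq x hx
    have e1 : μ (fun x => f (x, q.1) - f (x, q.2)) = F q.1 - F q.2 := by
      have : (fun x => f (x, q.1) - f (x, q.2)) =
          (fun x => f (x, q.1)) - fun x => f (x, q.2) := rfl
      rw [this, meas_sub hμ (hsecX q.1) (hsecX q.2)]
    have e2 : μ (fun x => f (x, y₀) - f (x, y₀)) = 0 := by
      have : (fun x => f (x, y₀) - f (x, y₀)) =
          (fun x => f (x, y₀)) - fun x => f (x, y₀) := rfl
      rw [this, meas_sub hμ (hsecX y₀) (hsecX y₀), sub_self]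
    rw [e1, e2, sub_zero] at hcl
    exact hcl
  refine ⟨hFub, ?_⟩
  -- Part 2
  set M : ℝ := Cν + 1 with hM
  have hM0 : (0 : ℝ) < M := by rw [hM]; linarith
  have hCνM : Cν ≤ M := by rw [hM]; linarith
  have hMb : ∀ h : Y → ℝ, IsUb h → ∀ s : ℝ, 0 ≤ s → (∀ y, |h y| ≤ s) → |ν h| ≤ M * s :=
    fun h hh s hs hb => (hCν h hh s hs hb).trans (mul_le_mul_of_nonneg_right hCνM hs)
  have hgdiff : ∀ (s : ℝ), 0 < s → ∀ q : X × X,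
      (∀ y, |f (q.1, y) - f (q.2, y)| < s) → |g q.1 - g q.2| ≤ M * s := by
    intro s hs q hq
    have hsub : IsUb ((fun y => f (q.1, y)) - fun y => f (q.2, y)) :=
      (hsecY q.1).sub (hsecY q.2)
    have hb : ∀ y, |((fun y => f (q.1, y)) - fun y => f (q.2, y)) y| ≤ s :=
      fun y => (hq y).le
    have := hMb _ hsub s hs.le hb
    rwa [meas_sub hν (hsecY q.1) (hsecY q.2)] at this
  have hgub : IsUb g := by
    refine ⟨uc_of_eps fun ε hε => ?_, Cν * D, fun x => hCν _ (hsecY x) D hD0.le fun y => hfD _⟩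
    have hε' : (0 : ℝ) < ε / (2 * M) := by positivity
    refine (ue_eps hf.2.1 hε').mono fun q hq => ?_
    have := hgdiff _ hε' q hq
    have hlt : M * (ε / (2 * M)) < ε := by
      rw [mul_div_assoc']
      rw [div_lt_iff₀ (by positivity)]
      nlinarith
    linarith
  have key : ∀ ε : ℝ, 0 < ε → |μ g - ν F| < 2 * ε := by
    intro ε hε
    set H : Set (X → ℝ) := {h | ∃ m : ℕ, ∃ c : Fin m → ℝ, ∃ yv : Fin m → Y,
      (∑ i, |c i|) ≤ M ∧ h = fun x => ∑ i, c i * f (x, yv i)} ∪ {g} with hH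
    have hHb : ∃ C : ℝ, ∀ h ∈ H, ∀ x, |h x| ≤ C := by
      refine ⟨M * D, ?_⟩
      rintro h (⟨m, c, yv, hc, rfl⟩ | rfl)
      · intro x
        calc |∑ i, c i * f (x, yv i)| ≤ ∑ i, |c i * f (x, yv i)| :=
              Finset.abs_sum_le_sum_abs _ _
        _ ≤ ∑ i, |c i| * D := Finset.sum_le_sum fun i _ => by
              rw [abs_mul]
              exact mul_le_mul_of_nonneg_left (hfD _) (abs_nonneg _)
        _ = (∑ i, |c i|) * D := (Finset.sum_mul _ _ _).symm
        _ ≤ M * D := mul_le_mul_of_nonneg_right hc hD0.le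
      · intro x
        exact (hCν _ (hsecY x) D hD0.le fun y => hfD _).trans
          (mul_le_mul_of_nonneg_right hCνM hD0.le)
    have hHue : H.UniformEquicontinuous := by
      intro U hU
      rw [Metric.mem_uniformity_dist] at hU
      obtain ⟨ε', hε', hεU⟩ := hU
      have hδ2 : (0 : ℝ) < ε' / (2 * M) := by positivity
      have hhalf : M * (ε' / (2 * M)) = ε' / 2 := by field_simp
      refine (ue_eps hf.2.1 hδ2).mono fun q hq i => ?_
      apply hεU
      rw [Real.dist_eq]
      rcases i.2 with ⟨m, c, yv, hc, hrep⟩ | hrep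
      · have hkey : (i : X → ℝ) q.1 - (i : X → ℝ) q.2 =
            ∑ i', c i' * (f (q.1, yv i') - f (q.2, yv i')) := by
          rw [hrep]
          dsimp only
          rw [← Finset.sum_sub_distrib]
          exact Finset.sum_congr rfl fun i' _ => by ring
        rw [hkey]
        calc |∑ i', c i' * (f (q.1, yv i') - f (q.2, yv i'))|
            ≤ ∑ i', |c i' * (f (q.1, yv i') - f (q.2, yv i'))| :=
              Finset.abs_sum_le_sum_abs _ _
        _ ≤ ∑ i', |c i'| * (ε' / (2 * M)) := Finset.sum_le_sum fun i' _ => by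
              rw [abs_mul]
              exact mul_le_mul_of_nonneg_left (hq (yv i')).le (abs_nonneg _)
        _ = (∑ i', |c i'|) * (ε' / (2 * M)) := (Finset.sum_mul _ _ _).symm
        _ ≤ M * (ε' / (2 * M)) := mul_le_mul_of_nonneg_right hc hδ2.le
        _ = ε' / 2 := hhalf
        _ < ε' := by linarith
      · rw [Set.mem_singleton_iff] at hrep
        rw [hrep]
        have := hgdiff _ hδ2 q hq
        rw [hhalf] at this
        linarith
    obtain ⟨K, δ, hδ, hK⟩ := hμu H hHb hHue g (Or.inr rfl) ε hε
    set δ₀ : ℝ := min δ ε with hδ₀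
    have hδ₀0 : 0 < δ₀ := lt_min hδ hε
    set φ : Option {x // x ∈ K} → Y → ℝ :=
      fun j => Option.elim j F (fun xx => fun y => f (xx.1, y)) with hφdef
    have hφub : ∀ j, IsUb (φ j) := by
      rintro (_ | xx)
      · exact hFub
      · exact hsecY _
    obtain ⟨m, c, yv, hcM, happ⟩ := molecular_approx ν hν hM0 hMb φ hφub hδ₀0
    set h : X → ℝ := fun x => ∑ i, c i * f (x, yv i) with hh
    have hmemH : h ∈ H := Or.inl ⟨m, c, yv, hcM, rfl⟩
    have hclose : ∀ x ∈ K, |h x - g x| < δ := by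
      intro x hx
      have h' : |(∑ i, c i * f (x, yv i)) - ν (fun y => f (x, y))| < δ₀ :=
        happ (some ⟨x, hx⟩)
      exact lt_of_lt_of_le h' (min_le_left _ _)
    have h1 : |μ h - μ g| < ε := hK h hmemH hclose
    have h2 : μ h = ∑ i, c i * F (yv i) := by
      have hrw : h = ∑ i : Fin m, c i • (fun x => f (x, yv i)) := by
        funext x
        rw [hh]
        simp [Finset.sum_apply]
      rw [hrw, meas_sum hμ _ _ _ fun i _ => hsecX (yv i)]
    have h3 : |(∑ i, c i * F (yv i)) - ν F| < ε := by
      have h' : |(∑ i, c i * F (yv i)) - ν F| < δ₀ := happ none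
      exact lt_of_lt_of_le h' (min_le_right _ _)
    rw [← h2] at h3
    have habc := abs_sub_le (μ g) (μ h) (ν F)
    have hcomm : |μ g - μ h| = |μ h - μ g| := abs_sub_comm _ _
    linarith
  have hzero : |μ g - ν F| = 0 := by
    by_contra hne
    have hpos : 0 < |μ g - ν F| := lt_of_le_of_ne (abs_nonneg _) (Ne.symm hne)
    have := key (|μ g - ν F| / 4) (by linarith)
    linarith
  exact sub_eq_zero.mp (abs_eq_zero.mp hzero)
end
end
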